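/- For the cdf F(x) = (2/π) arctan(x), x ≥ 0, of the absolute value of a standard Cauchy random variable, the function h_F(x) = −log(F(1/x)) = −log((2/π) arctan(1/x)) is not subadditive on (0, ∞): there exist x, y > 0 with h_F(x+y) > h_F(x) + h_F(y). In particular this distribution does not belong to the class H of distributions with subadditive h_F. -/
import Mathlib


open MeasureTheory
open Real in
lemma my_arctan_ge {x : ℝ} (hx : 0 ≤ x) : x - x^3/3 ≤ arctan x := by
  have h : MonotoneOn (fun t : ℝ => arctan t - (t - t^3/3)) (Set.Ici 0) := by
    apply monotoneOn_of_deriv_nonneg (convex_Ici 0)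
    · exact (Real.continuous_arctan.sub (by continuity)).continuousOn
    · intro t ht
      exact ((Real.differentiable_arctan t).sub (by fun_prop)).differentiableWithinAt
    · intro t ht
      simp only [interior_Ici, Set.mem_Ioi] at ht
      have hd : HasDerivAt (fun t : ℝ => arctan t - (t - t^3/3))
          (1/(1+t^2) - (1 - 3*t^2/3)) t := by
        exact (Real.hasDerivAt_arctan t).sub
          ((hasDerivAt_id t).sub (((hasDerivAt_pow 3 t)).div_const 3))
      rw [hd.deriv]
      have h1 : (0:ℝ) < 1 + t^2 := by positivity
      rw [sub_nonneg, le_div_iff₀ h1]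
      nlinarith [pow_nonneg ht.le 4]
  have := h (Set.self_mem_Ici) (Set.mem_Ici.mpr hx) hx
  simpa [arctan_zero] using this

open Real in
lemma my_arctan_le {x : ℝ} (hx : 0 ≤ x) : arctan x ≤ x - x^3/3 + x^5/5 := by
  have h : MonotoneOn (fun t : ℝ => (t - t^3/3 + t^5/5) - arctan t) (Set.Ici 0) := by
    apply monotoneOn_of_deriv_nonneg (convex_Ici 0)
    · exact ((by continuity : Continuous fun t : ℝ => t - t^3/3 + t^5/5).sub
        Real.continuous_arctan).continuousOn
    · intro t ht
      exact ((by fun_prop : DifferentiableAt ℝ (fun t : ℝ => t - t^3/3 + t^5/5) t).sub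
        (Real.differentiable_arctan t)).differentiableWithinAt
    · intro t ht
      simp only [interior_Ici, Set.mem_Ioi] at ht
      have hd : HasDerivAt (fun t : ℝ => (t - t^3/3 + t^5/5) - arctan t)
          ((1 - 3*t^2/3 + 5*t^4/5) - 1/(1+t^2)) t := by
        exact (((hasDerivAt_id t).sub ((hasDerivAt_pow 3 t).div_const 3)).add
          ((hasDerivAt_pow 5 t).div_const 5)).sub (Real.hasDerivAt_arctan t)
      rw [hd.deriv]
      have h1 : (0:ℝ) < 1 + t^2 := by positivity
      rw [sub_nonneg, div_le_iff₀ h1]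
      nlinarith [pow_nonneg ht.le 6]
  have := h (Set.self_mem_Ici) (Set.mem_Ici.mpr hx) hx
  simpa [arctan_zero] using this

open Real

/-- For the cdf `F x = (2/π) arctan x`, `x ≥ 0`, of the absolute value of a standard
Cauchy random variable, the function `h_F x = -log (F (1/x)) = -log ((2/π) arctan (1/x))`
is not subadditive on `(0, ∞)`: there exist `x, y > 0` with `h_F (x + y) > h_F x + h_F y`.
In particular this distribution does not belong to the class `H` of distributions with
subadditive `h_F`. -/
theorem stmt17 :
    ∃ x y : ℝ, 0 < x ∧ 0 < y ∧
      -Real.log (2 / Real.pi * Real.arctan (1 / x)) +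
        -Real.log (2 / Real.pi * Real.arctan (1 / y)) <
      -Real.log (2 / Real.pi * Real.arctan (1 / (x + y))) := by
  refine ⟨1/4, 1/4, by norm_num, by norm_num, ?_⟩
  have h4 : (1:ℝ) / (1/4) = 4 := by norm_num
  have h2 : (1:ℝ) / (1/4 + 1/4) = 2 := by norm_num
  rw [h4, h2]
  have hpi : 0 < π := Real.pi_pos
  -- arctan identities
  have e2 : arctan 2 = π/2 - arctan 2⁻¹ := by
    have := Real.arctan_inv_of_pos (by norm_num : (0:ℝ) < 2⁻¹)
    rw [inv_inv] at this; linarith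
  have e4 : arctan 4 = π/2 - arctan 4⁻¹ := by
    have := Real.arctan_inv_of_pos (by norm_num : (0:ℝ) < 4⁻¹)
    rw [inv_inv] at this; linarith
  have b2 : (11:ℝ)/24 ≤ arctan 2⁻¹ := by
    have := my_arctan_ge (by norm_num : (0:ℝ) ≤ 2⁻¹)
    norm_num at this ⊢; linarith
  have b4 : arctan 4⁻¹ ≤ 3763/15360 := by
    have := my_arctan_le (by norm_num : (0:ℝ) ≤ 4⁻¹)
    norm_num at this ⊢; linarith
  have pl : π < 3.141593 := Real.pi_lt_d6
  have pg : (3.141592:ℝ) < π := Real.pi_gt_d6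
  have key0 : π * arctan 2 < 2 * (arctan 4)^2 := by
    rw [e2, e4]; nlinarith [sq_nonneg (π - 3.1415926), sq_nonneg (arctan 4⁻¹)]
  have ha4 : 0 < arctan 4 := by simpa using Real.arctan_strictMono (by norm_num : (0:ℝ) < 4)
  have ha2 : 0 < arctan 2 := by simpa using Real.arctan_strictMono (by norm_num : (0:ℝ) < 2)
  set A := 2 / π * arctan 4 with hA
  set B := 2 / π * arctan 2 with hB
  have hApos : 0 < A := by positivity
  have hBpos : 0 < B := by positivity
  have key : B < A^2 := by
    rw [hA, hB, div_mul_eq_mul_div, div_mul_eq_mul_div, div_pow, div_lt_div_iff₀ hpi (by positivity)]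
    ring_nf
    nlinarith [sq_nonneg π]
  have hlog : Real.log B < Real.log (A^2) := Real.log_lt_log hBpos key
  rw [Real.log_pow] at hlog
  push_cast at hlog
  linarith
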